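/- Let r ≥ 0 and s be integers, and for 0 ≤ i ≤ r define c_i(t) = (−1)^i · binom(r,i) · (cosh t)^{−i−s}, with the convention c_{−1} ≡ 0. Then for every t > 0 and every i with 0 ≤ i ≤ r, the functions c_i satisfy both of the following equations: (i) −(1/2)·c_i'(t) − ((i+s)/2)·tanh(t)·c_i(t) + i·coth(t)·c_i(t) + (r−i+1)·(sinh t)^{−1}·c_{i−1}(t) = 0; and (ii) i·[ (1/2)·c_i'(t) + ((i+s)/2)·tanh(t)·c_i(t) + (r+1−i)·coth(t)·c_i(t) ] + (r+1−i)²·(sinh t)^{−1}·c_{i−1}(t) = 0. -/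

import Mathlib

/-- The radial Schmid-operator equations for the holomorphic discrete series of
`SU(2,1)`: the functions `c_i(t) = (−1)^i C(r,i) (cosh t)^{−i−s}` (for `0 ≤ i ≤ r`,
with `c_{−1} ≡ 0`) satisfy `P⁺_τ∘∇ᴸ₋φ = 0` and `P⁻_τ∘∇ᴸ₋φ = 0`. -/
theorem stmt_9 (r : ℕ) (s : ℤ) (c : ℤ → ℝ → ℝ)
    (hc : ∀ i : ℤ, ∀ t : ℝ,
      c i t = if 0 ≤ i ∧ i ≤ (r : ℤ) then
        (-1 : ℝ) ^ i.toNat * (r.choose i.toNat : ℝ) * Real.cosh t ^ (-i - s) else 0) :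
    ∀ t : ℝ, 0 < t → ∀ i : ℤ, 0 ≤ i → i ≤ (r : ℤ) →
      (-(1 / 2) * deriv (c i) t - ((i : ℝ) + (s : ℝ)) / 2 * Real.tanh t * c i t
          + (i : ℝ) * (Real.cosh t / Real.sinh t) * c i t
          + ((r : ℝ) - (i : ℝ) + 1) * (Real.sinh t)⁻¹ * c (i - 1) t = 0) ∧
      ((i : ℝ) * ((1 / 2) * deriv (c i) t + ((i : ℝ) + (s : ℝ)) / 2 * Real.tanh t * c i t
          + ((r : ℝ) + 1 - (i : ℝ)) * (Real.cosh t / Real.sinh t) * c i t)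
          + ((r : ℝ) + 1 - (i : ℝ)) ^ 2 * (Real.sinh t)⁻¹ * c (i - 1) t = 0) := by
  intro t ht i hi0 hir
  lift i to ℕ using hi0 with n
  have hn : n ≤ r := by exact_mod_cast hir
  have hC : (0:ℝ) < Real.cosh t := Real.cosh_pos t
  have hS : (0:ℝ) < Real.sinh t := Real.sinh_pos_iff.mpr ht
  set K : ℝ := (-1:ℝ) ^ n * (r.choose n : ℝ) with hK
  set M : ℤ := -(n:ℤ) - s with hM
  set A : ℝ := Real.cosh t ^ M with hA
  have hcn : c (n:ℤ) = fun u => K * Real.cosh u ^ M := by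
    funext u
    rw [hc, if_pos ⟨Int.natCast_nonneg n, by exact_mod_cast hn⟩]
    simp [hK, hM]
  have hct : c (n:ℤ) t = K * A := by rw [hcn]
  have hderiv : deriv (c (n:ℤ)) t
      = K * ((-(n:ℝ) - (s:ℝ)) * (A * (Real.cosh t)⁻¹) * Real.sinh t) := by
    rw [hcn]
    have h1 : HasDerivAt (fun u => K * Real.cosh u ^ M)
        (K * ((M : ℝ) * Real.cosh t ^ (M - 1) * Real.sinh t)) t := by
      have := ((hasDerivAt_zpow M (Real.cosh t) (Or.inl hC.ne')).comp t
        (Real.hasDerivAt_cosh t)).const_mul K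
      exact this
      try ring
    rw [h1.deriv, zpow_sub_one₀ hC.ne']
    push_cast [hM]
    try ring
  have hcm : ∃ K' : ℝ, c ((n:ℤ) - 1) t = K' * (A * Real.cosh t) ∧
      (n:ℝ) * K + ((r:ℝ) - (n:ℝ) + 1) * K' = 0 := by
    rcases n with _ | j
    · refine ⟨0, ?_, by simp⟩
      rw [hc, if_neg (by omega)]
      simp
    · refine ⟨(-1:ℝ) ^ j * (r.choose j : ℝ), ?_, ?_⟩
      · rw [hc, if_pos ⟨by omega, by omega⟩]
        have e1 : ((((j+1:ℕ)):ℤ) - 1).toNat = j := by omega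
        have e2 : -((((j+1:ℕ)):ℤ) - 1) - s = M + 1 := by rw [hM]; push_cast; try ring
        rw [e1, e2, zpow_add_one₀ hC.ne']
        try push_cast
        try ring
      · have hj : j ≤ r := by omega
        have hb := Nat.choose_succ_right_eq r j
        have hb' : (r.choose (j+1) : ℝ) * ((j:ℝ) + 1) = (r.choose j : ℝ) * ((r:ℝ) - (j:ℝ)) := by
          have h3 : ((r.choose (j+1) * (j+1) : ℕ) : ℝ) = ((r.choose j * (r - j) : ℕ) : ℝ) := by
            exact_mod_cast congrArg (Nat.cast : ℕ → ℝ) hb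
          push_cast [Nat.cast_sub hj] at h3
          linarith
        rw [hK]
        push_cast
        linear_combination (-(-1:ℝ)^j) * hb'
  obtain ⟨K', hc', hkey⟩ := hcm
  constructor
  · rw [hderiv, hct, hc', Real.tanh_eq_sinh_div_cosh]
    push_cast
    linear_combination (Real.cosh t * A * (Real.sinh t)⁻¹) * hkey
  · rw [hderiv, hct, hc', Real.tanh_eq_sinh_div_cosh]
    push_cast
    linear_combination (((r:ℝ) + 1 - (n:ℝ)) * Real.cosh t * A * (Real.sinh t)⁻¹) * hkey
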